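/- Let d ∈ ℕ, β > 0, and let K, A, B be d×d complex matrices with K Hermitian. Define the Gibbs expectation ⟨X⟩ := Tr(X e^{-βK})/Tr(e^{-βK}), the imaginary-time evolution γ_s(A) := e^{sK} A e^{-sK}, and the time-ordered correlation F_X : [−β/2, β/2] → ℂ by F_X(s) := ⟨γ_s(X)B⟩ for s ∈ [0, β/2] and F_X(s) := ⟨B γ_s(X)⟩ for s ∈ [−β/2, 0). Then for every η ∈ (2π/β)ℤ: η ∫_{-β/2}^{β/2} e^{-iηs} F_A(s) ds = −i ∫_{-β/2}^{β/2} e^{-iηs} F_{[K,A]}(s) ds − i⟨[A,B]⟩, where [X,Y] := XY − YX. -/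

import Mathlib

noncomputable section

/-- The Gibbs expectation `⟨X⟩ = Tr(X e^{-βK}) / Tr(e^{-βK})`. -/
def gibbsExp {d : ℕ} (β : ℝ) (K X : Matrix (Fin d) (Fin d) ℂ) : ℂ :=
  (X * NormedSpace.exp ((-(β : ℂ)) • K)).trace / (NormedSpace.exp ((-(β : ℂ)) • K)).trace

/-- The imaginary-time evolution `γ_s(A) = e^{sK} A e^{-sK}`. -/
def imagTimeEv {d : ℕ} (K A : Matrix (Fin d) (Fin d) ℂ) (s : ℝ) : Matrix (Fin d) (Fin d) ℂ :=
  NormedSpace.exp ((s : ℂ) • K) * A * NormedSpace.exp ((-(s : ℂ)) • K)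

/-- The time-ordered correlation `F_X(s)`. -/
def timeOrdered {d : ℕ} (β : ℝ) (K X B : Matrix (Fin d) (Fin d) ℂ) (s : ℝ) : ℂ :=
  if 0 ≤ s then gibbsExp β K (imagTimeEv K X s * B) else gibbsExp β K (B * imagTimeEv K X s)

attribute [local instance] Matrix.linftyOpNormedRing Matrix.linftyOpNormedAlgebra

open NormedSpace MeasureTheory intervalIntegral

namespace Stmt17Aux

variable {d : ℕ} (K X B C : Matrix (Fin d) (Fin d) ℂ)

lemma expK_hasDerivAt (s : ℝ) :
    HasDerivAt (fun t : ℝ => exp ((t : ℂ) • K)) (K * exp ((s : ℂ) • K)) s := by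
  have h1 : HasDerivAt (fun u : ℂ => exp (u • K)) (K * exp ((s : ℂ) • K)) (s : ℂ) :=
    hasDerivAt_exp_smul_const' K (s : ℂ)
  have h2 : HasDerivAt (fun t : ℝ => (t : ℂ)) 1 s := Complex.ofRealCLM.hasDerivAt
  have h3 := h1.scomp s h2
  simp [Function.comp_def] at h3
  exact h3

lemma expKneg_hasDerivAt (s : ℝ) :
    HasDerivAt (fun t : ℝ => exp ((-(t : ℂ)) • K)) (-(exp ((-(s : ℂ)) • K) * K)) s := by
  have h1 : HasDerivAt (fun u : ℂ => exp (u • K)) (exp ((-(s : ℂ)) • K) * K) (-(s : ℂ)) :=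
    hasDerivAt_exp_smul_const K (-(s : ℂ))
  have h2 : HasDerivAt (fun t : ℝ => -(t : ℂ)) (-1) s := Complex.ofRealCLM.hasDerivAt.neg
  have h3 := h1.scomp s h2
  simp [Function.comp_def] at h3 ⊢
  exact h3

lemma commK_expK (u : ℂ) : K * exp (u • K) = exp (u • K) * K :=
  (((Commute.refl K).smul_right u).exp_right).eq

lemma imagTimeEv_hasDerivAt (s : ℝ) :
    HasDerivAt (fun t : ℝ => imagTimeEv K X t) (imagTimeEv K (K * X - X * K) s) s := by
  have h := ((expK_hasDerivAt K s).mul_const X).mul (expKneg_hasDerivAt K s)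
  refine h.congr_deriv ?_
  symm
  unfold imagTimeEv
  rw [commK_expK, ← commK_expK K (-(s : ℂ))]
  noncomm_ring

/-- Derivative of `G X s = Tr((γ_s(X) B) C)`. -/
lemma G_hasDerivAt (s : ℝ) :
    HasDerivAt (fun t : ℝ => ((imagTimeEv K X t * B) * C).trace)
      (((imagTimeEv K (K * X - X * K) s * B) * C).trace) s := by
  have h := ((imagTimeEv_hasDerivAt K X s).mul_const B).mul_const C
  exact ((LinearMap.toContinuousLinearMap (Matrix.traceLinearMap (Fin d) ℂ ℂ)).restrictScalars
    ℝ).hasFDerivAt.comp_hasDerivAt s h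

/-- Derivative of `H X s = Tr((B γ_s(X)) C)`. -/
lemma H_hasDerivAt (s : ℝ) :
    HasDerivAt (fun t : ℝ => ((B * imagTimeEv K X t) * C).trace)
      (((B * imagTimeEv K (K * X - X * K) s) * C).trace) s := by
  have h := ((imagTimeEv_hasDerivAt K X s).const_mul B).mul_const C
  exact ((LinearMap.toContinuousLinearMap (Matrix.traceLinearMap (Fin d) ℂ ℂ)).restrictScalars
    ℝ).hasFDerivAt.comp_hasDerivAt s h

lemma G_continuous : Continuous (fun t : ℝ => ((imagTimeEv K X t * B) * C).trace) :=
  Differentiable.continuous (fun s => (G_hasDerivAt K X B C s).differentiableAt)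

lemma H_continuous : Continuous (fun t : ℝ => ((B * imagTimeEv K X t) * C).trace) :=
  Differentiable.continuous (fun s => (H_hasDerivAt K X B C s).differentiableAt)

lemma phi_hasDerivAt (η s : ℝ) :
    HasDerivAt (fun t : ℝ => Complex.exp (-Complex.I * η * t))
      (-Complex.I * η * Complex.exp (-Complex.I * η * s)) s := by
  have h := (((hasDerivAt_id (s : ℂ)).const_mul (-Complex.I * η)).cexp).comp_ofReal
  simpa [mul_comm] using h

lemma phi_continuous (η : ℝ) : Continuous (fun t : ℝ => Complex.exp (-Complex.I * η * t)) := by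
  fun_prop

/-- Integration by parts against `e^{-iηs}`. -/
lemma ibp (η : ℝ) (f f' : ℝ → ℂ) (hf : ∀ s, HasDerivAt f (f' s) s)
    (cf' : Continuous f') (a b : ℝ) :
    ∫ s in a..b, Complex.exp (-Complex.I * η * s) * f' s
      = Complex.exp (-Complex.I * η * b) * f b - Complex.exp (-Complex.I * η * a) * f a
        + Complex.I * η * ∫ s in a..b, Complex.exp (-Complex.I * η * s) * f s := by
  set Φ : ℝ → ℂ := fun t => Complex.exp (-Complex.I * η * t) with hΦ
  have cf : Continuous f := Differentiable.continuous (fun s => (hf s).differentiableAt)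
  have key : ∀ s : ℝ, HasDerivAt (fun t => Φ t * f t)
      ((-Complex.I * η) * (Φ s * f s) + Φ s * f' s) s := by
    intro s
    have := (phi_hasDerivAt η s).mul (hf s)
    convert this using 1
    · rfl
    · rfl
    · simp only [hΦ]
      ring
  have int1 : IntervalIntegrable (fun s => (-Complex.I * η) * (Φ s * f s)) volume a b :=
    (continuous_const.mul ((phi_continuous η).mul cf)).intervalIntegrable a b
  have int2 : IntervalIntegrable (fun s => Φ s * f' s) volume a b :=
    ((phi_continuous η).mul cf').intervalIntegrable a b
  have h := integral_eq_sub_of_hasDerivAt (f := fun t => Φ t * f t)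
    (fun s _ => key s) (int1.add int2)
  rw [integral_add int1 int2, intervalIntegral.integral_const_mul] at h
  linear_combination h

end Stmt17Aux

open Stmt17Aux

/-- The Euclidean (imaginary-time) Ward identity in the Gibbs state: the
jump of the time-ordering produces the commutator (Schwinger) term, while the boundary terms
cancel by the KMS property whenever `ηβ ∈ 2πℤ`. -/
theorem stmt17 {d : ℕ} (β : ℝ) (hβ : 0 < β)
    (K A B : Matrix (Fin d) (Fin d) ℂ) (hK : K.IsHermitian)
    (η : ℝ) (hη : ∃ m : ℤ, η = 2 * Real.pi * (m : ℝ) / β) :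
    (η : ℂ) *
        ∫ s in (-(β / 2))..(β / 2),
          Complex.exp (-Complex.I * (η : ℂ) * (s : ℂ)) * timeOrdered β K A B s =
      -Complex.I *
          (∫ s in (-(β / 2))..(β / 2),
            Complex.exp (-Complex.I * (η : ℂ) * (s : ℂ)) *
              timeOrdered β K (K * A - A * K) B s) -
        Complex.I * gibbsExp β K (A * B - B * A) := by
  obtain ⟨m, hm⟩ := hη
  have hb : (0:ℝ) < β / 2 := by positivity
  set b : ℝ := β / 2 with hbdef
  set C : Matrix (Fin d) (Fin d) ℂ := NormedSpace.exp ((-(β : ℂ)) • K) with hCdef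
  set Z : ℂ := C.trace with hZdef
  set Φ : ℝ → ℂ := fun t => Complex.exp (-Complex.I * η * t) with hΦ
  set G : Matrix (Fin d) (Fin d) ℂ → ℝ → ℂ :=
    fun X s => ((imagTimeEv K X s * B) * C).trace with hGdef
  set H : Matrix (Fin d) (Fin d) ℂ → ℝ → ℂ :=
    fun X s => ((B * imagTimeEv K X s) * C).trace with hHdef
  have ae_ne : ∀ᵐ s : ℝ ∂volume, s ≠ 0 := by
    rw [MeasureTheory.ae_iff]
    simpa using Real.volume_singleton
  -- splitting the integral at 0
  have key_split : ∀ X : Matrix (Fin d) (Fin d) ℂ,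
      (∫ s in (-b)..b, Complex.exp (-Complex.I * η * s) * timeOrdered β K X B s)
        = ((∫ s in (-b)..(0:ℝ), Φ s * H X s) + ∫ s in (0:ℝ)..b, Φ s * G X s) / Z := by
    intro X
    have cg := (phi_continuous η).mul (G_continuous K X B C)
    have ch := (phi_continuous η).mul (H_continuous K X B C)
    have hTO : ∀ s : ℝ, Complex.exp (-Complex.I * η * s) * timeOrdered β K X B s
        = (Φ s * (if 0 ≤ s then G X s else H X s)) / Z := by
      intro s
      rw [timeOrdered]
      split <;> rw [gibbsExp, mul_div_assoc]
    simp only [hTO]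
    rw [intervalIntegral.integral_div]
    congr 1
    have aeq1 : ∀ᵐ s : ℝ ∂(volume.restrict (Set.uIoc (-b) 0)),
        Φ s * H X s = Φ s * (if 0 ≤ s then G X s else H X s) := by
      filter_upwards [ae_restrict_of_ae ae_ne, ae_restrict_mem measurableSet_uIoc]
        with s hs0 hsmem
      have hle : s ≤ 0 := le_trans hsmem.2 (by simp [neg_nonpos.2 hb.le])
      rw [if_neg (fun h => hs0 (le_antisymm hle h))]
    have aeq2 : ∀ᵐ s : ℝ ∂(volume.restrict (Set.uIoc 0 b)),
        Φ s * G X s = Φ s * (if 0 ≤ s then G X s else H X s) := by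
      filter_upwards [ae_restrict_mem measurableSet_uIoc] with s hsmem
      have h0 : (0:ℝ) ≤ s := le_of_lt (lt_of_le_of_lt (by simp [hb.le]) hsmem.1)
      rw [if_pos h0]
    have int1 : IntervalIntegrable (fun s => Φ s * (if 0 ≤ s then G X s else H X s))
        volume (-b) 0 := (ch.intervalIntegrable _ _).congr_ae aeq1
    have int2 : IntervalIntegrable (fun s => Φ s * (if 0 ≤ s then G X s else H X s))
        volume 0 b := (cg.intervalIntegrable _ _).congr_ae aeq2
    rw [← integral_add_adjacent_intervals int1 int2]
    congr 1
    · exact (integral_congr_ae ((ae_restrict_iff' measurableSet_uIoc).mp aeq1)).symm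
    · exact (integral_congr_ae ((ae_restrict_iff' measurableSet_uIoc).mp aeq2)).symm
  -- merging exponentials
  have hsum : ∀ u v : ℂ, exp (u • K) * exp (v • K) = exp ((u + v) • K) := by
    intro u v
    rw [add_smul]
    exact (NormedSpace.exp_add_of_commute (((Commute.refl K).smul_right v).smul_left u)).symm
  have hbC : (b : ℂ) = (β : ℂ) / 2 := by rw [hbdef]; push_cast; ring
  have hηβC : (η : ℂ) * (β : ℂ) = 2 * (Real.pi : ℂ) * (m : ℂ) := by
    have : (η : ℝ) * β = 2 * Real.pi * m := by rw [hm]; field_simp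
    exact_mod_cast congrArg (fun x : ℝ => (x : ℂ)) this
  -- KMS boundary identity
  have hGb : G A b = (A * exp ((-(b : ℂ)) • K) * B * exp ((-(b : ℂ)) • K)).trace := by
    have h1 : G A b
        = (exp ((b : ℂ) • K) * (A * (exp ((-(b : ℂ)) • K) * (B * C)))).trace := by
      simp only [hGdef, imagTimeEv, mul_assoc]
    rw [h1, Matrix.trace_mul_comm]
    rw [hCdef]
    simp only [mul_assoc]
    rw [hsum (-(β : ℂ)) ((b : ℂ))]
    have hc : (-(β : ℂ) + (b : ℂ)) = -(b : ℂ) := by rw [hbC]; ring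
    rw [hc]
  have hHb : H A (-b) = (A * exp ((-(b : ℂ)) • K) * B * exp ((-(b : ℂ)) • K)).trace := by
    have h1 : H A (-b)
        = ((B * (exp ((-(b : ℂ)) • K) * (A * (exp ((b : ℂ) • K) * C))))).trace := by
      simp only [hHdef, imagTimeEv, Complex.ofReal_neg, neg_neg, mul_assoc]
    rw [h1, hCdef]
    rw [hsum ((b : ℂ)) (-(β : ℂ))]
    have hc : ((b : ℂ) + -(β : ℂ)) = -(b : ℂ) := by rw [hbC]; ring
    rw [hc]
    have h2 : B * (exp ((-(b : ℂ)) • K) * (A * exp ((-(b : ℂ)) • K)))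
        = (B * exp ((-(b : ℂ)) • K)) * (A * exp ((-(b : ℂ)) • K)) := by
      simp only [mul_assoc]
    rw [h2, Matrix.trace_mul_comm]
    simp only [mul_assoc]
  have hphase : Φ b = Φ (-b) := by
    show Complex.exp _ = Complex.exp _
    rw [Complex.exp_eq_exp_iff_exists_int]
    refine ⟨-m, ?_⟩
    push_cast
    linear_combination (-Complex.I) * hηβC - 2 * Complex.I * (η : ℂ) * hbC
  have bd : Φ b * G A b = Φ (-b) * H A (-b) := by rw [hGb, hHb, hphase]
  -- values at 0
  have him0 : imagTimeEv K A 0 = A := by simp [imagTimeEv, NormedSpace.exp_zero]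
  have hG0 : G A 0 = ((A * B) * C).trace := by rw [hGdef]; simp only [him0]
  have hH0 : H A 0 = ((B * A) * C).trace := by rw [hHdef]; simp only [him0]
  have hΦ0 : Φ 0 = 1 := by show Complex.exp _ = 1; norm_num
  -- integration by parts on the two halves
  have e₁ : (∫ s in (0:ℝ)..b, Φ s * G (K * A - A * K) s)
      = Φ b * G A b - Φ 0 * G A 0
        + Complex.I * η * ∫ s in (0:ℝ)..b, Φ s * G A s :=
    ibp η (G A) (G (K * A - A * K)) (G_hasDerivAt K A B C)
      (G_continuous K (K * A - A * K) B C) 0 b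
  have e₂ : (∫ s in (-b)..(0:ℝ), Φ s * H (K * A - A * K) s)
      = Φ 0 * H A 0 - Φ (-b) * H A (-b)
        + Complex.I * η * ∫ s in (-b)..(0:ℝ), Φ s * H A s :=
    ibp η (H A) (H (K * A - A * K)) (H_hasDerivAt K A B C)
      (H_continuous K (K * A - A * K) B C) (-b) 0
  -- final assembly
  have hgz : gibbsExp β K (A * B - B * A) = (((A * B) * C).trace - ((B * A) * C).trace) / Z := by
    rw [gibbsExp]
    congr 1
    rw [sub_mul, Matrix.trace_sub]
  rw [key_split A, key_split (K * A - A * K), hgz]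
  rw [hΦ0, hG0] at e₁
  rw [hΦ0, hH0] at e₂
  linear_combination (Complex.I / Z) * e₂ + (Complex.I / Z) * e₁ + (Complex.I / Z) * bd
    + ((η : ℂ) * ((∫ s in (-b)..(0:ℝ), Φ s * H A s)
        + ∫ s in (0:ℝ)..b, Φ s * G A s) / Z) * Complex.I_mul_I

end
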